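/- Let Γ be an n-valent GKM-graph whose underlying graph has finitely many vertices. If Γ is n-independent, then every face of Γ is chordless. -/
import Mathlib


/-- The star of a set `F` of (directed) edges at a vertex `v`:
all edges in `F` with initial vertex `v`. -/
def edgeStar {V : Type} (F : Set (V × V)) (v : V) : Set (V × V) :=
  {e ∈ F | e.1 = v}

/-- A GKM-graph on the vertex type `V`, with connection `nabla` and axial
function `alpha` taking values in `ℤ^k`.  Edges are ordered pairs of distinct
vertices; the edge set is closed under reversal and the underlying graph is
connected.  The connection `∇_e` restricts to a bijection from the star of
`i(e)` onto the star of `t(e)` sending `e` to its reversal, and the axial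
function satisfies the rank, opposite sign and congruence conditions. -/
structure GKMGraph (V : Type) (k : ℕ) : Type where
  E : Set (V × V)
  nabla : V × V → V × V → V × V
  alpha : V × V → Fin k → ℤ
  vert_nonempty : Nonempty V
  no_loops : ∀ e ∈ E, e.1 ≠ e.2
  rev_mem : ∀ e ∈ E, (e.2, e.1) ∈ E
  graph_connected : ∀ u v : V, Relation.ReflTransGen (fun a b => (a, b) ∈ E) u v
  nabla_bijOn : ∀ e ∈ E, Set.BijOn (nabla e) (edgeStar E e.1) (edgeStar E e.2)
  nabla_self : ∀ e ∈ E, nabla e e = (e.2, e.1)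
  rank : ∀ v : V, Submodule.span ℤ (alpha '' edgeStar E v) = ⊤
  opposite : ∀ e ∈ E, alpha (e.2, e.1) = -alpha e
  congruence : ∀ e ∈ E, ∀ e' ∈ E, e'.1 = e.1 →
    ∃ c : ℤ, alpha (nabla e e') = alpha e' + c • alpha e

namespace GKMGraph

variable {V : Type} {k : ℕ}

/-- The star of the GKM-graph `Γ` at a vertex `v`. -/
def star (Γ : GKMGraph V k) (v : V) : Set (V × V) := edgeStar Γ.E v

/-- `Γ.IsFace W F` : the subgraph with vertex set `W` and edge set `F` is a
face (totally geodesic subgraph) of `Γ`: it is a nonempty connected regular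
subgraph closed under edge reversal and invariant under the connection. -/
structure IsFace (Γ : GKMGraph V k) (W : Set V) (F : Set (V × V)) : Prop where
  nonempty : W.Nonempty
  sub : F ⊆ Γ.E
  src_mem : ∀ e ∈ F, e.1 ∈ W
  tgt_mem : ∀ e ∈ F, e.2 ∈ W
  rev_mem : ∀ e ∈ F, (e.2, e.1) ∈ F
  connected : ∀ u ∈ W, ∀ v ∈ W, Relation.ReflTransGen (fun a b => (a, b) ∈ F) u v
  invariant : ∀ e ∈ F, ∀ e' ∈ F, e'.1 = e.1 → Γ.nabla e e' ∈ F
  regular : ∃ r : ℕ, ∀ v ∈ W, (edgeStar F v).Finite ∧ (edgeStar F v).ncard = r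

/-- `Γ.IsNFace W F r` : the subgraph `(W, F)` is an `r`-face of `Γ`,
i.e. a face all of whose stars have exactly `r` elements. -/
def IsNFace (Γ : GKMGraph V k) (W : Set V) (F : Set (V × V)) (r : ℕ) : Prop :=
  Γ.IsFace W F ∧ ∀ v ∈ W, (edgeStar F v).Finite ∧ (edgeStar F v).ncard = r

/-- The span `α⟨Ξ⟩` of a face with edge set `F`, computed at the vertex `v`. -/
def faceSpan (Γ : GKMGraph V k) (F : Set (V × V)) (v : V) : Submodule ℤ (Fin k → ℤ) :=
  Submodule.span ℤ (Γ.alpha '' edgeStar F v)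

/-- `Π_γ`, the composite `∇_{e_r} ∘ ⋯ ∘ ∇_{e_1}` of the connection along the
edge path `γ = (e_1, …, e_r)`, applied to an edge `e`. -/
def transport (Γ : GKMGraph V k) (γ : List (V × V)) (e : V × V) : V × V :=
  γ.foldl (fun x g => Γ.nabla g x) e

/-- An edge of `Γ` transversal to the subgraph `(W, F)`:
it emanates from a vertex of `W` but does not belong to `F`. -/
def IsTransversal (Γ : GKMGraph V k) (W : Set V) (F : Set (V × V)) (e : V × V) : Prop :=
  e ∈ Γ.E ∧ e ∉ F ∧ e.1 ∈ W

/-- A chord of the subgraph `(W, F)`: a transversal edge both of whose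
endpoints lie in `W`. -/
def IsChord (Γ : GKMGraph V k) (W : Set V) (F : Set (V × V)) (e : V × V) : Prop :=
  Γ.IsTransversal W F e ∧ e.2 ∈ W

/-- `Γ` is `j`-independent: the values of the axial function on any `j`
distinct edges with a common origin are linearly independent over `ℤ`. -/
def IsIndependent (Γ : GKMGraph V k) (j : ℕ) : Prop :=
  ∀ v : V, ∀ s : Finset (V × V), ↑s ⊆ Γ.star v → s.card = j →
    LinearIndependent ℤ (fun e : {x : V × V // x ∈ s} => Γ.alpha e.1)

/-- `Γ` is `j`-complete: any `i ≤ j` distinct edges with a common origin `v`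
form the star at `v` of some `i`-face of `Γ`. -/
def IsComplete (Γ : GKMGraph V k) (j : ℕ) : Prop :=
  ∀ v : V, ∀ i : ℕ, i ≤ j → ∀ s : Finset (V × V), ↑s ⊆ Γ.star v → s.card = i →
    ∃ (W : Set V) (F : Set (V × V)), Γ.IsNFace W F i ∧ v ∈ W ∧ edgeStar F v = ↑s

/-- `Γ` is `n`-valent: every star of `Γ` has exactly `n` elements. -/
def IsValent (Γ : GKMGraph V k) (n : ℕ) : Prop :=
  ∀ v : V, (Γ.star v).Finite ∧ (Γ.star v).ncard = n

/-- `Γ'` is an extension of `Γ`: both GKM-graphs have the same underlying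
graph and the same connection, and there is a surjective homomorphism
`p : ℤ^{k'} → ℤ^k` with `p ∘ α' = α` on all edges. -/
def IsExtension {k' : ℕ} (Γ' : GKMGraph V k') (Γ : GKMGraph V k) : Prop :=
  Γ'.E = Γ.E ∧
  (∀ e ∈ Γ.E, ∀ e' ∈ Γ.E, e'.1 = e.1 → Γ'.nabla e e' = Γ.nabla e e') ∧
  ∃ p : (Fin k' → ℤ) →ₗ[ℤ] (Fin k → ℤ), Function.Surjective p ∧
    ∀ e ∈ Γ.E, p (Γ'.alpha e) = Γ.alpha e

end GKMGraph

/-- An edge path contained in the edge set `F`: consecutive edges are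
composable (`t(e_m) = i(e_{m+1})`). -/
def IsEdgePathIn {V : Type} (F : Set (V × V)) (γ : List (V × V)) : Prop :=
  (∀ g ∈ γ, g ∈ F) ∧ γ.Chain' (fun g h => g.2 = h.1)


section Aux

variable {V : Type} {k : ℕ}

/-- Single-step inclusion of face spans. -/
lemma faceSpan_step (Γ : GKMGraph V k) {W : Set V} {F : Set (V × V)}
    (hF : Γ.IsFace W F) {g : V × V} (hg : g ∈ F) :
    Γ.faceSpan F g.2 ≤ Γ.faceSpan F g.1 := by
  rw [GKMGraph.faceSpan, Submodule.span_le]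
  rintro x ⟨f, ⟨hfF, hf1⟩, rfl⟩
  have hgbar : (g.2, g.1) ∈ F := hF.rev_mem g hg
  have hgbarE : ((g.2, g.1) : V × V) ∈ Γ.E := hF.sub hgbar
  have hfE : f ∈ Γ.E := hF.sub hfF
  have hf1' : f.1 = ((g.2, g.1) : V × V).1 := hf1
  have hinv : Γ.nabla (g.2, g.1) f ∈ F := hF.invariant _ hgbar f hfF hf1'
  have hmt : Γ.nabla (g.2, g.1) f ∈ edgeStar Γ.E g.1 :=
    (Γ.nabla_bijOn _ hgbarE).mapsTo ⟨hfE, hf1'⟩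
  obtain ⟨c, hc⟩ := Γ.congruence _ hgbarE f hfE hf1'
  have hgmem : Γ.alpha g ∈ Γ.faceSpan F g.1 :=
    Submodule.subset_span ⟨g, ⟨hg, rfl⟩, rfl⟩
  have hgbarmem : Γ.alpha ((g.2, g.1) : V × V) ∈ Γ.faceSpan F g.1 := by
    rw [Γ.opposite g (hF.sub hg)]; exact neg_mem hgmem
  have hnab : Γ.alpha (Γ.nabla (g.2, g.1) f) ∈ Γ.faceSpan F g.1 :=
    Submodule.subset_span ⟨_, ⟨hinv, hmt.2⟩, rfl⟩
  have : Γ.alpha f = Γ.alpha (Γ.nabla (g.2, g.1) f) - c • Γ.alpha ((g.2, g.1) : V × V) := by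
    rw [hc]; abel
  rw [this]
  exact sub_mem hnab (Submodule.smul_mem _ _ hgbarmem)

lemma faceSpan_mono (Γ : GKMGraph V k) {W : Set V} {F : Set (V × V)}
    (hF : Γ.IsFace W F) {u v : V}
    (huv : Relation.ReflTransGen (fun a b => (a, b) ∈ F) u v) :
    Γ.faceSpan F v ≤ Γ.faceSpan F u := by
  induction huv with
  | refl => exact le_rfl
  | tail _ hbc ih => exact fun x hx => ih (faceSpan_step Γ hF hbc hx)

/-- Span of all of `F` is contained in the face span at any `v ∈ W`. -/
lemma span_le_faceSpan (Γ : GKMGraph V k) {W : Set V} {F : Set (V × V)}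
    (hF : Γ.IsFace W F) {v : V} (hv : v ∈ W) :
    Submodule.span ℤ (Γ.alpha '' F) ≤ Γ.faceSpan F v := by
  rw [Submodule.span_le]
  rintro x ⟨g, hg, rfl⟩
  have h1 : Γ.alpha g ∈ Γ.faceSpan F g.1 := Submodule.subset_span ⟨g, ⟨hg, rfl⟩, rfl⟩
  exact faceSpan_mono Γ hF (hF.connected v hv g.1 (hF.src_mem g hg)) h1

/-- Transport along a path in `F` changes `α` by an element of the span of `α '' F`. -/
lemma transport_exists (Γ : GKMGraph V k) {W : Set V} {F : Set (V × V)}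
    (hF : Γ.IsFace W F) {u v : V}
    (huv : Relation.ReflTransGen (fun a b => (a, b) ∈ F) u v)
    (e : V × V) (heE : e ∈ Γ.E) (he1 : e.1 = u) :
    ∃ e' : V × V, e' ∈ Γ.E ∧ e'.1 = v ∧
      Γ.alpha e' - Γ.alpha e ∈ Submodule.span ℤ (Γ.alpha '' F) := by
  induction huv with
  | refl => exact ⟨e, heE, he1, by simp⟩
  | @tail b c _ hbc ih =>
    obtain ⟨e'', he''E, he''1, hspan⟩ := ih
    have hgE : ((b, c) : V × V) ∈ Γ.E := hF.sub hbc
    have hmt : Γ.nabla (b, c) e'' ∈ edgeStar Γ.E c :=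
      (Γ.nabla_bijOn _ hgE).mapsTo ⟨he''E, he''1⟩
    obtain ⟨d, hd⟩ := Γ.congruence _ hgE e'' he''E he''1
    refine ⟨Γ.nabla (b, c) e'', hmt.1, hmt.2, ?_⟩
    have hbcmem : Γ.alpha ((b, c) : V × V) ∈ Submodule.span ℤ (Γ.alpha '' F) :=
      Submodule.subset_span ⟨_, hbc, rfl⟩
    have : Γ.alpha (Γ.nabla (b, c) e'') - Γ.alpha e =
        (Γ.alpha e'' - Γ.alpha e) + d • Γ.alpha ((b, c) : V × V) := by
      rw [hd]; abel
    rw [this]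
    exact add_mem hspan (Submodule.smul_mem _ _ hbcmem)

end Aux

/-- in an `n`-valent, `n`-independent GKM-graph with finitely
many vertices, every face is chordless. -/
theorem chordless_of_top_independent {V : Type} [Finite V] {k : ℕ}
    (Γ : GKMGraph V k) (n : ℕ) (hval : Γ.IsValent n) (h : Γ.IsIndependent n) :
    ∀ (W : Set V) (F : Set (V × V)), Γ.IsFace W F →
      ∀ e : V × V, ¬ Γ.IsChord W F e := by
  classical
  rintro W F hF e ⟨⟨heE, heF, h1W⟩, h2W⟩
  -- the reversed edge
  set eb : V × V := (e.2, e.1) with hebdef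
  have hebE : eb ∈ Γ.E := Γ.rev_mem e heE
  have hebF : eb ∉ F := by
    intro hmem
    exact heF (by simpa using hF.rev_mem eb hmem)
  -- transport e along a path in F from e.1 to e.2
  obtain ⟨e', he'E, he'1, hspan⟩ :=
    transport_exists Γ hF (hF.connected e.1 h1W e.2 h2W) e heE rfl
  have hkey : Γ.alpha e' + Γ.alpha eb ∈ Γ.faceSpan F e.2 := by
    have h1 : Γ.alpha e' - Γ.alpha e ∈ Γ.faceSpan F e.2 :=
      span_le_faceSpan Γ hF h2W hspan
    have h2 : Γ.alpha eb = - Γ.alpha e := Γ.opposite e heE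
    rw [h2]
    simpa [sub_eq_add_neg] using h1
  -- the full star at e.2 as a finset
  obtain ⟨hfin, hcard⟩ := hval e.2
  set st : Finset (V × V) := hfin.toFinset with hstdef
  have hstcoe : (↑st : Set (V × V)) = Γ.star e.2 := hfin.coe_toFinset
  have hstcard : st.card = n := by
    rw [← hcard, Set.ncard_eq_toFinset_card _ hfin]
  have hind := h e.2 st (subset_of_eq hstcoe) hstcard
  -- star of F at e.2 is contained in star at e.2
  have hFsub : edgeStar F e.2 ⊆ Γ.star e.2 := fun x hx => ⟨hF.sub hx.1, hx.2⟩
  have hebst : eb ∈ st := by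
    rw [← Finset.mem_coe, hstcoe]; exact ⟨hebE, rfl⟩
  have he'st : e' ∈ st := by
    rw [← Finset.mem_coe, hstcoe]; exact ⟨he'E, he'1⟩
  -- express the key element as a finite combination
  rw [GKMGraph.faceSpan, Finsupp.mem_span_image_iff_linearCombination] at hkey
  obtain ⟨l, hlsupp, hlsum⟩ := hkey
  have hlsub : (l.support : Set (V × V)) ⊆ ↑st := by
    intro x hx
    rw [Finset.mem_coe, ← Finset.mem_coe, hstcoe]
    exact hFsub (hlsupp hx)
  have hleb : l eb = 0 := by
    by_contra hne
    exact hebF (hlsupp (Finsupp.mem_support_iff.mpr hne)).1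
  -- build the vanishing combination
  set c : V × V → ℤ := fun x =>
    l x - (if x = e' then 1 else 0) - (if x = eb then 1 else 0) with hcdef
  have hsum0 : ∑ x ∈ st, c x • Γ.alpha x = 0 := by
    have hsl : ∑ x ∈ st, l x • Γ.alpha x = Γ.alpha e' + Γ.alpha eb := by
      rw [← hlsum, Finsupp.linearCombination_apply, Finsupp.sum]
      exact (Finset.sum_subset (by exact_mod_cast hlsub)
        (fun x _ hx => by simp [Finsupp.notMem_support_iff.mp hx])).symm
    have hs1 : ∑ x ∈ st, (if x = e' then (1:ℤ) else 0) • Γ.alpha x = Γ.alpha e' := by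
      simp [ite_smul, Finset.sum_ite_eq' st e' (fun x => Γ.alpha x), he'st]
    have hs2 : ∑ x ∈ st, (if x = eb then (1:ℤ) else 0) • Γ.alpha x = Γ.alpha eb := by
      simp [ite_smul, Finset.sum_ite_eq' st eb (fun x => Γ.alpha x), hebst]
    have : ∑ x ∈ st, c x • Γ.alpha x =
        (∑ x ∈ st, l x • Γ.alpha x) - (∑ x ∈ st, (if x = e' then (1:ℤ) else 0) • Γ.alpha x)
          - (∑ x ∈ st, (if x = eb then (1:ℤ) else 0) • Γ.alpha x) := by
      rw [← Finset.sum_sub_distrib, ← Finset.sum_sub_distrib]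
      exact Finset.sum_congr rfl (fun x _ => by simp [hcdef, sub_smul])
    rw [this, hsl, hs1, hs2]
    abel
  -- contradiction with linear independence
  rw [Fintype.linearIndependent_iff] at hind
  have hzero := hind (fun x => c x.1) ?_ ⟨eb, hebst⟩
  · have : c eb ≠ 0 := by
      simp only [hcdef, hleb]
      by_cases hee : eb = e' <;> simp [hee]
    exact this hzero
  · rw [← hsum0, ← Finset.sum_coe_sort st (fun x => c x • Γ.alpha x)]
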